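/- Let F₂ be the free group on x and y and let k ≥ 1 be odd, k ≥ 3. Define βₛ = x^{s-1}(xy³)x^{s-1} for 1 ≤ s ≤ k, β_{k+1} = y x^{k-1}(xy³)x^{k-1} x, and β_{k+t} = x^{-(t-1)} y x^{k} y³ x^{k} x^{t-1} for t ≥ 2. Then for any n ≥ k the elements β₁, ..., βₙ form a free basis of a free subgroup of F₂ of rank n. -/

import Mathlib

/-!
Statement 15: for odd `k ≥ 3` define `βₛ = x^{s-1}(xy³)x^{s-1}` for `1 ≤ s ≤ k`,
`β_{k+1} = y x^{k-1}(xy³)x^{k-1} x`, and `β_{k+t} = x^{-(t-1)} y x^k y³ x^k x^{t-1}`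
for `t ≥ 2`.  Then for any `n ≥ k` the elements `β₁, …, βₙ` form a free basis of a
free subgroup of `F₂` of rank `n`.  Expressed via injectivity of the lift
`FreeGroup (Fin n) →* F₂`, index `i ↦ s = i + 1`.
-/

namespace Stmt15

abbrev F2 := FreeGroup (Fin 2)

def x : F2 := FreeGroup.of 0
def y : F2 := FreeGroup.of 1

def β (k s : ℕ) : F2 :=
  if s ≤ k then x ^ (s - 1) * (x * y ^ 3) * x ^ (s - 1)
  else if s = k + 1 then y * x ^ (k - 1) * (x * y ^ 3) * x ^ (k - 1) * x
  else (x ^ (s - k - 1))⁻¹ * y * x ^ k * y ^ 3 * x ^ k * x ^ (s - k - 1)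

abbrev Ltr := Fin 2 × Bool

def xp : Ltr := (0, true)
def xm : Ltr := (0, false)
def yp : Ltr := (1, true)
def ym : Ltr := (1, false)

def iv (p : Ltr) : Ltr := (p.1, !p.2)

def R' (p q : Ltr) : Prop := q ≠ iv p

instance (p q : Ltr) : Decidable (R' p q) := inferInstanceAs (Decidable (q ≠ iv p))

def run (c : Ltr) (m : ℕ) : List Ltr := List.replicate m c

open List FreeGroup

lemma R'_iff {a b : Ltr} : R' a b ↔ ¬(a.1 = b.1 ∧ a.2 = !b.2) := by
  unfold R' iv
  constructor
  · rintro hr ⟨h1, h2⟩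
    exact hr (Prod.ext h1.symm (by rw [h2, Bool.not_not]))
  · intro h he
    exact h ⟨(congrArg Prod.fst he).symm, by rw [congrArg Prod.snd he, Bool.not_not]⟩

lemma chain'_iff_reduce {L : List Ltr} : FreeGroup.reduce L = L ↔ List.IsChain R' L := by
  constructor
  · intro h
    induction L with
    | nil => exact List.isChain_nil
    | cons a t ih =>
      rw [FreeGroup.reduce.cons] at h
      rcases ht : FreeGroup.reduce t with _ | ⟨hd, tl⟩
      · rw [ht] at h
        simp only at h
        have : t = [] := by simpa using congrArg List.tail h.symm
        subst this
        simp
      · rw [ht] at h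
        by_cases hc : a.1 = hd.1 ∧ a.2 = !hd.2
        · exfalso
          change (if a.1 = hd.1 ∧ a.2 = !hd.2 then tl else a :: hd :: tl) = a :: t at h
          rw [if_pos hc] at h
          have h2 : (FreeGroup.reduce t).length ≤ t.length := by
            simpa using (FreeGroup.Red.length_le (FreeGroup.reduce.red (L := t)))
          have : tl.length = t.length + 1 := by rw [h]; simp
          rw [ht] at h2
          simp at h2
          omega
        · change (if a.1 = hd.1 ∧ a.2 = !hd.2 then tl else a :: hd :: tl) = a :: t at h
          rw [if_neg hc] at h
          have htt : t = hd :: tl := by simpa using (congrArg List.tail h).symm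
          have : FreeGroup.reduce t = t := by rw [ht, htt]
          have hcht := ih this
          rw [htt]
          exact List.IsChain.cons_cons (R'_iff.mpr hc) (htt ▸ hcht)
  · intro h
    induction L with
    | nil => rfl
    | cons a t ih =>
      have h2 : List.IsChain R' t := h.tail
      rw [FreeGroup.reduce.cons, ih h2]
      cases t with
      | nil => rfl
      | cons b u =>
        have hr : R' a b := (List.isChain_cons_cons.mp h).1
        change (if a.1 = b.1 ∧ a.2 = !b.2 then u else a :: b :: u) = a :: b :: u
        rw [if_neg (R'_iff.mp hr)]

lemma iv_ne (c : Ltr) : c ≠ iv c := by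
  intro h
  have := congrArg Prod.snd h
  simp [iv] at this

@[simp] lemma run_zero (c : Ltr) : run c 0 = [] := rfl
lemma run_succ (c : Ltr) (m : ℕ) : run c (m+1) = c :: run c m := rfl

lemma head?_run_append (c : Ltr) (m : ℕ) (M : List Ltr) (hm : m ≠ 0) :
    (run c m ++ M).head? = some c := by
  cases m with
  | zero => omega
  | succ m => rfl

lemma chain'_run_append {c : Ltr} {M : List Ltr} (h : List.IsChain R' M)
    (hh : M.head? ≠ some (iv c)) (m : ℕ) : List.IsChain R' (run c m ++ M) := by
  induction m with
  | zero => simpa using h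
  | succ m ih =>
    rw [run_succ, List.cons_append, List.isChain_cons]
    refine ⟨?_, ih⟩
    intro z hz
    cases m with
    | zero =>
      simp only [run_zero, List.nil_append] at hz
      rw [hz] at hh
      intro he; exact hh (by rw [he])
    | succ m =>
      rw [head?_run_append c _ _ (by omega)] at hz
      intro he
      rw [he] at hz
      exact iv_ne c (Option.some_inj.mp hz)

lemma decomp (c : Ltr) (M : List Ltr) (h : List.IsChain R' M) :
    ∃ j M', M = run c j ++ M' ∧ M'.head? ≠ some c ∧ List.IsChain R' M' ∧
      (j ≠ 0 → M'.head? ≠ some (iv c)) := by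
  induction M with
  | nil => exact ⟨0, [], by simp, by simp, List.isChain_nil, by simp⟩
  | cons a t ih =>
    by_cases hac : a = c
    · obtain ⟨j, M', he, hh, hch, hiv⟩ := ih h.tail
      refine ⟨j + 1, M', by rw [run_succ, List.cons_append, ← he, hac], hh, hch, ?_⟩
      intro _
      cases j with
      | zero =>
        simp only [run_zero, List.nil_append] at he
        cases M' with
        | nil => simp
        | cons b u =>
          have hr : R' a b := by rw [he] at h; exact (List.isChain_cons_cons.mp h).1
          simp only [List.head?_cons, Ne, Option.some_inj]
          intro hbe
          exact hr (by rw [hbe, hac])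
      | succ j => exact hiv (by omega)
    · exact ⟨0, a :: t, by simp, by simpa using hac, h, by simp⟩

lemma mk_run_pos (a : Fin 2) (m : ℕ) :
    FreeGroup.mk (run (a, true) m) = FreeGroup.of a ^ m := by
  conv_rhs => rw [← FreeGroup.mk_toWord (x := FreeGroup.of a ^ m)]
  rw [FreeGroup.toWord_of_pow]
  rfl

lemma mk_run_neg (a : Fin 2) (m : ℕ) :
    FreeGroup.mk (run (a, false) m) = (FreeGroup.of a ^ m)⁻¹ := by
  conv_rhs => rw [← FreeGroup.mk_toWord (x := (FreeGroup.of a ^ m)⁻¹)]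
  rw [FreeGroup.toWord_inv, FreeGroup.toWord_of_pow]
  congr 1
  simp [FreeGroup.invRev, run, List.map_replicate, List.reverse_replicate]

lemma mk_append (L M : List Ltr) : FreeGroup.mk (L ++ M) = FreeGroup.mk L * FreeGroup.mk M :=
  (FreeGroup.mul_mk).symm

lemma mk_xp (m : ℕ) : FreeGroup.mk (run xp m) = x ^ m := mk_run_pos 0 m
lemma mk_xm (m : ℕ) : FreeGroup.mk (run xm m) = (x ^ m)⁻¹ := mk_run_neg 0 m
lemma mk_yp (m : ℕ) : FreeGroup.mk (run yp m) = y ^ m := mk_run_pos 1 m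
lemma mk_ym (m : ℕ) : FreeGroup.mk (run ym m) = (y ^ m)⁻¹ := mk_run_neg 1 m

def Pre (P : List Ltr) : Set F2 := {g | P <+: g.toWord}

lemma mem_pre_of {g : F2} {P T : List Ltr} (h : g = FreeGroup.mk T)
    (hred : List.IsChain R' T) (hpre : P <+: T) : g ∈ Pre P := by
  show P <+: g.toWord
  rw [h, FreeGroup.toWord_mk, chain'_iff_reduce.mpr hred]
  exact hpre

lemma pre1 (P : List Ltr) (d : Ltr) (m : ℕ) (hm : m ≠ 0) (rest : List Ltr) :
    P ++ [d] <+: P ++ (run d m ++ rest) := by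
  obtain ⟨m', rfl⟩ : ∃ m', m = m' + 1 := ⟨m - 1, by omega⟩
  exact ⟨run d m' ++ rest, by simp [run, List.replicate_succ]⟩

lemma pre2 (P : List Ltr) (d e : Ltr) (m : ℕ) (hm : m ≠ 0) (rest : List Ltr) :
    P ++ [d, e] <+: P ++ (run d 1 ++ (run e m ++ rest)) := by
  obtain ⟨m', rfl⟩ : ∃ m', m = m' + 1 := ⟨m - 1, by omega⟩
  exact ⟨run e m' ++ rest, by simp [run, List.replicate_succ]⟩

lemma head?_some {M : List Ltr} {a : Ltr} (h : M.head? = some a) : ∃ u, M = a :: u := by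
  cases M with
  | nil => simp at h
  | cons b u =>
    have : b = a := Option.some_inj.mp (by simpa using h)
    exact ⟨u, by rw [this]⟩

lemma mem_pre_head {g : F2} {A M' : List Ltr} {a : Ltr}
    (hM : g.toWord = A ++ M') (hh : M'.head? = some a) : g ∈ Pre (A ++ [a]) := by
  obtain ⟨u, rfl⟩ := head?_some hh
  exact ⟨u, by rw [hM]; simp⟩

lemma beta_le {k s : ℕ} (h1 : 1 ≤ s) (hs : s ≤ k) : β k s = x ^ s * y ^ 3 * x ^ (s - 1) := by
  rw [β, if_pos hs]
  have : x ^ (s - 1) * x = x ^ s := by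
    rw [← pow_succ]; congr 1; omega
  rw [show x ^ (s-1) * (x * y^3) * x^(s-1) = (x^(s-1) * x) * y^3 * x^(s-1) by
    simp [mul_assoc], this]

lemma hX1 {k s : ℕ} (h1 : 1 ≤ s) (hs : s ≤ k) {g : F2}
    (hg : g ∉ Pre (run xm (s - 1) ++ [ym])) :
    β k s * g ∈ Pre (run xp s ++ [yp]) := by
  obtain ⟨j, M', hM, hh, hch, hiv⟩ :=
    decomp xm g.toWord (chain'_iff_reduce.mp (FreeGroup.reduce_toWord g))
  have hgM : g = (x ^ j)⁻¹ * FreeGroup.mk M' := by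
    conv_lhs => rw [← FreeGroup.mk_toWord (x := g)]
    rw [hM, mk_append, mk_xm]
  have hb : β k s = x ^ s * y ^ 3 * x ^ (s - 1) := beta_le h1 hs
  rcases lt_trichotomy j (s - 1) with hj | hj | hj
  · -- j < s - 1
    refine mem_pre_of (T := run xp s ++ (run yp 3 ++ (run xp (s - 1 - j) ++ M'))) ?_ ?_ ?_
    · have hx1 : (x : F2) ^ (s - 1) = x ^ (s - 1 - j) * x ^ j := by
        rw [← pow_add]; congr 1; omega
      rw [hb, hgM, hx1, mk_append, mk_append, mk_append, mk_xp, mk_yp, mk_xp]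
      simp only [mul_assoc, mul_inv_cancel_left]
    · refine chain'_run_append (chain'_run_append (chain'_run_append hch ?_ _) ?_ _) ?_ _
      · exact hh
      · rw [head?_run_append _ _ _ (by omega)]; decide
      · rw [head?_run_append _ _ _ (by norm_num)]; decide
    · exact pre1 _ _ _ (by norm_num) _
  · -- j = s - 1
    have hy : M'.head? ≠ some ym := by
      intro hcon
      exact hg (mem_pre_head (by rw [hM, hj]) hcon)
    refine mem_pre_of (T := run xp s ++ (run yp 3 ++ M')) ?_ ?_ ?_
    · rw [hb, hgM, hj, mk_append, mk_append, mk_xp, mk_yp]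
      simp only [mul_assoc, mul_inv_cancel_left]
    · refine chain'_run_append (chain'_run_append hch ?_ _) ?_ _
      · exact hy
      · rw [head?_run_append _ _ _ (by norm_num)]; decide
    · exact pre1 _ _ _ (by norm_num) _
  · -- j > s - 1, i.e. j ≥ s
    refine mem_pre_of (T := run xp s ++ (run yp 3 ++ (run xm (j - s + 1) ++ M'))) ?_ ?_ ?_
    · have hx1 : (x : F2) ^ j = x ^ (j - s + 1) * x ^ (s - 1) := by
        rw [← pow_add]; congr 1; omega
      rw [hb, hgM, hx1, mul_inv_rev, mk_append, mk_append, mk_append, mk_xp, mk_yp, mk_xm]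
      simp only [mul_assoc, mul_inv_cancel_left]
    · refine chain'_run_append (chain'_run_append (chain'_run_append hch ?_ _) ?_ _) ?_ _
      · exact hiv (by omega)
      · rw [head?_run_append _ _ _ (by omega)]; decide
      · rw [head?_run_append _ _ _ (by norm_num)]; decide
    · exact pre1 _ _ _ (by norm_num) _

lemma hY1 {k s : ℕ} (h1 : 1 ≤ s) (hs : s ≤ k) {g : F2}
    (hg : g ∉ Pre (run xp s ++ [yp])) :
    (β k s)⁻¹ * g ∈ Pre (run xm (s - 1) ++ [ym]) := by
  obtain ⟨j, M', hM, hh, hch, hiv⟩ :=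
    decomp xp g.toWord (chain'_iff_reduce.mp (FreeGroup.reduce_toWord g))
  have hgM : g = x ^ j * FreeGroup.mk M' := by
    conv_lhs => rw [← FreeGroup.mk_toWord (x := g)]
    rw [hM, mk_append, mk_xp]
  have hb : (β k s)⁻¹ = (x ^ (s-1))⁻¹ * ((y ^ 3)⁻¹ * (x ^ s)⁻¹) := by
    rw [beta_le h1 hs]
    simp only [mul_inv_rev, mul_assoc]
  rcases lt_trichotomy j s with hj | hj | hj
  · -- j < s
    refine mem_pre_of (T := run xm (s-1) ++ (run ym 3 ++ (run xm (s - j) ++ M'))) ?_ ?_ ?_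
    · have hx1 : (x : F2) ^ s = x ^ j * x ^ (s - j) := by
        rw [← pow_add]; congr 1; omega
      rw [hb, hgM, hx1, mul_inv_rev, mk_append, mk_append, mk_append, mk_xm, mk_ym, mk_xm]
      simp only [mul_assoc, inv_mul_cancel_left]
    · refine chain'_run_append (chain'_run_append (chain'_run_append hch ?_ _) ?_ _) ?_ _
      · exact hh
      · rw [head?_run_append _ _ _ (by omega)]; decide
      · rw [head?_run_append _ _ _ (by norm_num)]; decide
    · exact pre1 _ _ _ (by norm_num) _
  · -- j = s
    have hyy : M'.head? ≠ some yp := by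
      intro hcon
      exact hg (mem_pre_head (by rw [hM, hj]) hcon)
    refine mem_pre_of (T := run xm (s-1) ++ (run ym 3 ++ M')) ?_ ?_ ?_
    · rw [hb, hgM, hj, mk_append, mk_append, mk_xm, mk_ym]
      simp only [mul_assoc, inv_mul_cancel_left]
    · refine chain'_run_append (chain'_run_append hch ?_ _) ?_ _
      · exact hyy
      · rw [head?_run_append _ _ _ (by norm_num)]; decide
    · exact pre1 _ _ _ (by norm_num) _
  · -- j > s
    refine mem_pre_of (T := run xm (s-1) ++ (run ym 3 ++ (run xp (j - s) ++ M'))) ?_ ?_ ?_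
    · have hx1 : (x : F2) ^ j = x ^ s * x ^ (j - s) := by
        rw [← pow_add]; congr 1; omega
      rw [hb, hgM, hx1, mk_append, mk_append, mk_append, mk_xm, mk_ym, mk_xp]
      simp only [mul_assoc, inv_mul_cancel_left]
    · refine chain'_run_append (chain'_run_append (chain'_run_append hch ?_ _) ?_ _) ?_ _
      · exact hiv (by omega)
      · rw [head?_run_append _ _ _ (by omega)]; decide
      · rw [head?_run_append _ _ _ (by norm_num)]; decide
    · exact pre1 _ _ _ (by norm_num) _

lemma beta_gt {k s : ℕ} (hk1 : 1 ≤ k) (hs : k + 1 ≤ s) :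
    β k s = (x ^ (s - k - 1))⁻¹ * y * x ^ k * y ^ 3 * x ^ (k + (s - k - 1)) := by
  rcases eq_or_lt_of_le hs with he | hlt
  · subst he
    rw [β, if_neg (by omega), if_pos rfl]
    have e : (x:F2) ^ (k-1) * x = x ^ k := by rw [← pow_succ]; congr 1; omega
    have h0 : k + 1 - k - 1 = 0 := by omega
    rw [h0]
    simp only [pow_zero, inv_one, one_mul, Nat.add_zero]
    calc y * x^(k-1) * (x * y^3) * x^(k-1) * x
        = y * (x^(k-1) * x) * y^3 * (x^(k-1) * x) := by simp only [mul_assoc]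
      _ = y * x^k * y^3 * x^k := by rw [e]
  · rw [β, if_neg (by omega), if_neg (by omega)]
    simp only [pow_add, mul_assoc]

lemma hX2 {k s : ℕ} (hk1 : 1 ≤ k) (hs : k + 1 ≤ s) {g : F2}
    (hg : g ∉ Pre (run xm (s - 1) ++ [ym])) :
    β k s * g ∈ Pre (run xm (s - k - 1) ++ [yp, xp]) := by
  obtain ⟨u, rfl⟩ : ∃ u, s = k + 1 + u := ⟨s - k - 1, by omega⟩
  have hu : k + 1 + u - k - 1 = u := by omega
  have hv : k + 1 + u - 1 = k + u := by omega
  rw [hu]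
  rw [hv] at hg
  have hb : β k (k+1+u) = (x ^ u)⁻¹ * y * x ^ k * y ^ 3 * x ^ (k + u) := by
    rw [beta_gt hk1 (by omega), hu]
  obtain ⟨j, M', hM, hh, hch, hiv⟩ :=
    decomp xm g.toWord (chain'_iff_reduce.mp (FreeGroup.reduce_toWord g))
  have hgM : g = (x ^ j)⁻¹ * FreeGroup.mk M' := by
    conv_lhs => rw [← FreeGroup.mk_toWord (x := g)]
    rw [hM, mk_append, mk_xm]
  rcases lt_trichotomy j (k + u) with hj | hj | hj
  · refine mem_pre_of
      (T := run xm u ++ (run yp 1 ++ (run xp k ++ (run yp 3 ++ (run xp (k + u - j) ++ M'))))) ?_ ?_ ?_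
    · have hx1 : (x : F2) ^ (k + u) = x ^ (k + u - j) * x ^ j := by
        rw [← pow_add]; congr 1; omega
      rw [hb, hgM, hx1]
      simp only [mk_append, mk_xm, mk_xp, mk_yp, pow_one]
      simp only [mul_assoc, mul_inv_cancel_left]
    · refine chain'_run_append (chain'_run_append (chain'_run_append
        (chain'_run_append (chain'_run_append hch ?_ _) ?_ _) ?_ _) ?_ _) ?_ _
      · exact hh
      · rw [head?_run_append _ _ _ (by omega)]; decide
      · rw [head?_run_append _ _ _ (by norm_num)]; decide
      · rw [head?_run_append _ _ _ (by omega)]; decide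
      · rw [head?_run_append _ _ _ (by norm_num)]; decide
    · exact pre2 _ _ _ _ (by omega) _
  · have hyy : M'.head? ≠ some ym := by
      intro hcon
      exact hg (mem_pre_head (by rw [hM, hj]) hcon)
    refine mem_pre_of
      (T := run xm u ++ (run yp 1 ++ (run xp k ++ (run yp 3 ++ M')))) ?_ ?_ ?_
    · rw [hb, hgM, hj]
      simp only [mk_append, mk_xm, mk_xp, mk_yp, pow_one]
      simp only [mul_assoc, mul_inv_cancel_left]
    · refine chain'_run_append (chain'_run_append
        (chain'_run_append (chain'_run_append hch ?_ _) ?_ _) ?_ _) ?_ _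
      · exact hyy
      · rw [head?_run_append _ _ _ (by norm_num)]; decide
      · rw [head?_run_append _ _ _ (by omega)]; decide
      · rw [head?_run_append _ _ _ (by norm_num)]; decide
    · exact pre2 _ _ _ _ (by omega) _
  · refine mem_pre_of
      (T := run xm u ++ (run yp 1 ++ (run xp k ++ (run yp 3 ++ (run xm (j - (k + u)) ++ M'))))) ?_ ?_ ?_
    · have hx1 : (x : F2) ^ j = x ^ (j - (k + u)) * x ^ (k + u) := by
        rw [← pow_add]; congr 1; omega
      rw [hb, hgM, hx1, mul_inv_rev]
      simp only [mk_append, mk_xm, mk_xp, mk_yp, pow_one]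
      simp only [mul_assoc, mul_inv_cancel_left]
    · refine chain'_run_append (chain'_run_append (chain'_run_append
        (chain'_run_append (chain'_run_append hch ?_ _) ?_ _) ?_ _) ?_ _) ?_ _
      · exact hiv (by omega)
      · rw [head?_run_append _ _ _ (by omega)]; decide
      · rw [head?_run_append _ _ _ (by norm_num)]; decide
      · rw [head?_run_append _ _ _ (by omega)]; decide
      · rw [head?_run_append _ _ _ (by norm_num)]; decide
    · exact pre2 _ _ _ _ (by omega) _

lemma hY2 {k s : ℕ} (hk1 : 1 ≤ k) (hs : k + 1 ≤ s) {g : F2}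
    (hg : g ∉ Pre (run xm (s - k - 1) ++ [yp, xp])) :
    (β k s)⁻¹ * g ∈ Pre (run xm (s - 1) ++ [ym]) := by
  obtain ⟨u, rfl⟩ : ∃ u, s = k + 1 + u := ⟨s - k - 1, by omega⟩
  have hu : k + 1 + u - k - 1 = u := by omega
  have hv : k + 1 + u - 1 = k + u := by omega
  rw [hv]
  rw [hu] at hg
  have hb : (β k (k+1+u))⁻¹ = (x ^ (k+u))⁻¹ * ((y ^ 3)⁻¹ * ((x ^ k)⁻¹ * (y⁻¹ * x ^ u))) := by
    rw [beta_gt hk1 (by omega), hu]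
    simp only [mul_inv_rev, inv_inv, mul_assoc]
  obtain ⟨j, M', hM, hh, hch, hiv⟩ :=
    decomp xm g.toWord (chain'_iff_reduce.mp (FreeGroup.reduce_toWord g))
  have hgM : g = (x ^ j)⁻¹ * FreeGroup.mk M' := by
    conv_lhs => rw [← FreeGroup.mk_toWord (x := g)]
    rw [hM, mk_append, mk_xm]
  rcases lt_trichotomy j u with hj | hj | hj
  · refine mem_pre_of
      (T := run xm (k+u) ++ (run ym 3 ++ (run xm k ++ (run ym 1 ++ (run xp (u - j) ++ M'))))) ?_ ?_ ?_
    · have hx1 : (x : F2) ^ u = x ^ (u - j) * x ^ j := by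
        rw [← pow_add]; congr 1; omega
      rw [hb, hgM, hx1]
      simp only [mk_append, mk_xm, mk_ym, mk_xp, pow_one]
      simp only [mul_assoc, mul_inv_cancel_left]
    · refine chain'_run_append (chain'_run_append (chain'_run_append
        (chain'_run_append (chain'_run_append hch ?_ _) ?_ _) ?_ _) ?_ _) ?_ _
      · exact hh
      · rw [head?_run_append _ _ _ (by omega)]; decide
      · rw [head?_run_append _ _ _ (by norm_num)]; decide
      · rw [head?_run_append _ _ _ (by omega)]; decide
      · rw [head?_run_append _ _ _ (by norm_num)]; decide
    · exact pre1 _ _ _ (by norm_num) _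
  · -- j = u : subcases on whether M' starts with yp
    by_cases hhyp : M'.head? = some yp
    · obtain ⟨M'', rfl⟩ := head?_some hhyp
      have hch'' : List.IsChain R' M'' := hch.tail
      have hxph : M''.head? ≠ some xp := by
        intro hcon
        have h2 := mem_pre_head (g := g) (A := run xm u ++ [yp]) (by rw [hM, hj]; simp) hcon
        rw [show (run xm u ++ [yp]) ++ [xp] = run xm u ++ [yp, xp] by simp] at h2
        exact hg h2
      refine mem_pre_of
        (T := run xm (k+u) ++ (run ym 3 ++ (run xm k ++ M''))) ?_ ?_ ?_
      · rw [hb, hgM, hj, show (yp :: M'' : List Ltr) = [yp] ++ M'' from rfl, mk_append,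
          show FreeGroup.mk [yp] = y ^ 1 from mk_yp 1, pow_one]
        simp only [mk_append, mk_xm, mk_ym]
        simp only [mul_assoc, mul_inv_cancel_left, inv_mul_cancel_left]
      · refine chain'_run_append (chain'_run_append (chain'_run_append hch'' ?_ _) ?_ _) ?_ _
        · exact hxph
        · rw [head?_run_append _ _ _ (by omega)]; decide
        · rw [head?_run_append _ _ _ (by norm_num)]; decide
      · exact pre1 _ _ _ (by norm_num) _
    · refine mem_pre_of
        (T := run xm (k+u) ++ (run ym 3 ++ (run xm k ++ (run ym 1 ++ M')))) ?_ ?_ ?_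
      · rw [hb, hgM, hj]
        simp only [mk_append, mk_xm, mk_ym, pow_one]
        simp only [mul_assoc, mul_inv_cancel_left]
      · refine chain'_run_append (chain'_run_append
          (chain'_run_append (chain'_run_append hch ?_ _) ?_ _) ?_ _) ?_ _
        · exact hhyp
        · rw [head?_run_append _ _ _ (by norm_num)]; decide
        · rw [head?_run_append _ _ _ (by omega)]; decide
        · rw [head?_run_append _ _ _ (by norm_num)]; decide
      · exact pre1 _ _ _ (by norm_num) _
  · refine mem_pre_of
      (T := run xm (k+u) ++ (run ym 3 ++ (run xm k ++ (run ym 1 ++ (run xm (j - u) ++ M'))))) ?_ ?_ ?_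
    · have hx1 : (x : F2) ^ j = x ^ (j - u) * x ^ u := by
        rw [← pow_add]; congr 1; omega
      rw [hb, hgM, hx1, mul_inv_rev]
      simp only [mk_append, mk_xm, mk_ym, pow_one]
      simp only [mul_assoc, mul_inv_cancel_left]
    · refine chain'_run_append (chain'_run_append (chain'_run_append
        (chain'_run_append (chain'_run_append hch ?_ _) ?_ _) ?_ _) ?_ _) ?_ _
      · exact hiv (by omega)
      · rw [head?_run_append _ _ _ (by omega)]; decide
      · rw [head?_run_append _ _ _ (by norm_num)]; decide
      · rw [head?_run_append _ _ _ (by omega)]; decide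
      · rw [head?_run_append _ _ _ (by norm_num)]; decide
    · exact pre1 _ _ _ (by norm_num) _

lemma pre_nonempty {P : List Ltr} (h : List.IsChain R' P) : (Pre P).Nonempty := by
  refine ⟨FreeGroup.mk P, ?_⟩
  show P <+: (FreeGroup.mk P).toWord
  rw [FreeGroup.toWord_mk, chain'_iff_reduce.mpr h]

lemma run_pre_incomp {a c d : Ltr} {A B : List Ltr} (hc : c ≠ a) (hd : d ≠ a) :
    ∀ m m' : ℕ, (run a m ++ c :: A) <+: (run a m' ++ d :: B) → m = m' ∧ c = d := by
  intro m
  induction m with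
  | zero =>
    intro m' h
    cases m' with
    | zero =>
      simp only [run_zero, List.nil_append] at h
      exact ⟨rfl, (List.cons_prefix_cons.mp h).1⟩
    | succ m' =>
      rw [run_zero, List.nil_append, run_succ, List.cons_append] at h
      exact absurd (List.cons_prefix_cons.mp h).1 hc
  | succ m ih =>
    intro m' h
    cases m' with
    | zero =>
      rw [run_zero, List.nil_append, run_succ, List.cons_append] at h
      exact absurd (List.cons_prefix_cons.mp h).1.symm hd
    | succ m' =>
      rw [run_succ, List.cons_append, run_succ, List.cons_append] at h
      obtain ⟨hm, hcd⟩ := ih m' (List.cons_prefix_cons.mp h).2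
      exact ⟨by omega, hcd⟩

lemma pre_disj {a c d : Ltr} {A B : List Ltr} {m m' : ℕ} (hc : c ≠ a) (hd : d ≠ a)
    (hne : ¬(m = m' ∧ c = d)) :
    Disjoint (Pre (run a m ++ c :: A)) (Pre (run a m' ++ d :: B)) := by
  rw [Set.disjoint_left]
  intro g h1 h2
  replace h1 : (run a m ++ c :: A) <+: g.toWord := h1
  replace h2 : (run a m' ++ d :: B) <+: g.toWord := h2
  rcases List.prefix_or_prefix_of_prefix h1 h2 with h | h
  · exact hne (run_pre_incomp hc hd _ _ h)
  · obtain ⟨hm, hcd⟩ := run_pre_incomp hd hc _ _ h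
    exact hne ⟨hm.symm, hcd.symm⟩

lemma pre_disj_head {c d : Ltr} (h : c ≠ d) (A B : List Ltr) :
    Disjoint (Pre (c :: A)) (Pre (d :: B)) := by
  rw [Set.disjoint_left]
  intro g h1 h2
  obtain ⟨t1, ht1⟩ := (h1 : (c :: A) <+: g.toWord)
  obtain ⟨t2, ht2⟩ := (h2 : (d :: B) <+: g.toWord)
  rw [← ht2] at ht1
  simp only [List.cons_append] at ht1
  exact h (by injection ht1)

def Xset (k i : ℕ) : Set F2 :=
  if i + 1 ≤ k then Pre (run xp (i+1) ++ [yp]) else Pre (run xm (i+1-k-1) ++ [yp, xp])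

def Yset (i : ℕ) : Set F2 := Pre (run xm i ++ [ym])

lemma Xset_disj {k : ℕ} (hk1 : 1 ≤ k) {i j : ℕ} (hij : i ≠ j) :
    Disjoint (Xset k i) (Xset k j) := by
  have mixed : ∀ i' j' : ℕ, i' + 1 ≤ k → ¬(j' + 1 ≤ k) →
      Disjoint (Xset k i') (Xset k j') := by
    intro i' j' hi hj
    rw [Xset, if_pos hi, Xset, if_neg hj]
    have h1 : run xp (i'+1) ++ [yp] = xp :: (run xp i' ++ [yp]) := by
      rw [run_succ, List.cons_append]
    rw [h1]
    rcases e : j' + 1 - k - 1 with _ | u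
    · rw [run_zero, List.nil_append]
      exact pre_disj_head (by decide) _ _
    · rw [run_succ, List.cons_append]
      exact pre_disj_head (by decide) _ _
  by_cases hi : i + 1 ≤ k <;> by_cases hj : j + 1 ≤ k
  · rw [Xset, if_pos hi, Xset, if_pos hj]
    exact pre_disj (by decide) (by decide) (by rintro ⟨h, -⟩; omega)
  · exact mixed i j hi hj
  · exact (mixed j i hj hi).symm
  · rw [Xset, if_neg hi, Xset, if_neg hj]
    exact pre_disj (by decide) (by decide) (by rintro ⟨h, -⟩; omega)

lemma Yset_disj {i j : ℕ} (hij : i ≠ j) : Disjoint (Yset i) (Yset j) := by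
  rw [Yset, Yset]
  exact pre_disj (by decide) (by decide) (by rintro ⟨h, -⟩; omega)

lemma XYset_disj {k : ℕ} (hk1 : 1 ≤ k) (i j : ℕ) : Disjoint (Xset k i) (Yset j) := by
  rw [Xset, Yset]
  by_cases hi : i + 1 ≤ k
  · rw [if_pos hi]
    have h1 : run xp (i+1) ++ [yp] = xp :: (run xp i ++ [yp]) := by
      rw [run_succ, List.cons_append]
    rw [h1]
    cases j with
    | zero =>
      rw [run_zero, List.nil_append]
      exact pre_disj_head (by decide) _ _
    | succ m =>
      rw [run_succ, List.cons_append]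
      exact pre_disj_head (by decide) _ _
  · rw [if_neg hi]
    exact pre_disj (by decide) (by decide) (by rintro ⟨-, h⟩; exact absurd h (by decide))

theorem stmt_15 (k n : ℕ) (hk : 3 ≤ k) (hodd : Odd k) (hn : k ≤ n) :
    Function.Injective (FreeGroup.lift fun i : Fin n => β k ((i : ℕ) + 1)) := by
  have hk1 : 1 ≤ k := by omega
  haveI : Nontrivial (Fin n) :=
    ⟨⟨⟨0, by omega⟩, ⟨1, by omega⟩, by
      intro h
      have := congrArg Fin.val h
      simp at this⟩⟩
  refine FreeGroup.injective_lift_of_ping_pong _ (fun i : Fin n => Xset k ↑i)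
    (fun i : Fin n => Yset ↑i) ?_ ?_ ?_ ?_ ?_ ?_
  · -- nonempty
    intro i
    show (Xset k ↑i).Nonempty
    rw [Xset]
    by_cases hi : (i:ℕ) + 1 ≤ k
    · rw [if_pos hi]
      exact pre_nonempty (chain'_run_append (List.isChain_singleton _) (by decide) _)
    · rw [if_neg hi]
      exact pre_nonempty (chain'_run_append (List.isChain_pair.mpr (by decide)) (by decide) _)
  · -- X disjoint
    intro i j hij
    exact Xset_disj hk1 (fun h => hij (Fin.ext h))
  · -- Y disjoint
    intro i j hij
    exact Yset_disj (fun h => hij (Fin.ext h))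
  · -- XY disjoint
    intro i j
    exact XYset_disj hk1 _ _
  · -- hX
    intro i z hz
    rw [Set.mem_smul_set] at hz
    obtain ⟨w, hw, rfl⟩ := hz
    rw [smul_eq_mul]
    rw [Set.mem_compl_iff] at hw
    have hw' : w ∉ Pre (run xm ((i:ℕ) + 1 - 1) ++ [ym]) := by
      rw [Nat.add_sub_cancel]
      exact hw
    show β k ((i:ℕ)+1) * w ∈ Xset k ↑i
    rw [Xset]
    by_cases hi : (i:ℕ) + 1 ≤ k
    · rw [if_pos hi]
      exact hX1 (by omega) hi hw'
    · rw [if_neg hi]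
      exact hX2 hk1 (by omega) hw'
  · -- hY
    intro i z hz
    rw [Set.mem_smul_set] at hz
    obtain ⟨w, hw, rfl⟩ := hz
    rw [Pi.inv_apply, smul_eq_mul]
    rw [Set.mem_compl_iff] at hw
    replace hw : w ∉ Xset k ↑i := hw
    show (β k ((i:ℕ)+1))⁻¹ * w ∈ Yset ↑i
    rw [Yset, show (i:ℕ) = (i:ℕ) + 1 - 1 from by omega]
    by_cases hi : (i:ℕ) + 1 ≤ k
    · rw [Xset, if_pos hi] at hw
      exact hY1 (by omega) hi hw
    · rw [Xset, if_neg hi] at hw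
      exact hY2 hk1 (by omega) hw

end Stmt15
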